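/- Let H be a real Hilbert space, T > 0, σ > 0, and let f : [0,T] → H be Bochner square-integrable. Suppose v : [0,T] → H satisfies v(t) = ∫₀ᵗ (f(s) − σ⁻¹·v(s)) ds for all t ∈ [0,T] (so v(0) = 0 and v̇ + σ⁻¹v = f almost everywhere). Then: (a) ∫₀ᵀ ‖f(s) − σ⁻¹v(s)‖² ds ≤ ∫₀ᵀ ‖f(s)‖² ds, i.e. ‖v̇‖_{L²(0,T;H)} ≤ ‖f‖_{L²(0,T;H)}; and (b) ‖v(t)‖ ≤ √(σ/2)·(∫₀ᵀ ‖f(s)‖² ds)^{1/2} for every t ∈ [0,T]. -/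

import Mathlib

open MeasureTheory Set
open scoped RealInnerProductSpace

theorem energy_estimate_linear_ivp {H : Type*} [NormedAddCommGroup H]
    [InnerProductSpace ℝ H] [CompleteSpace H]
    (T σ : ℝ) (hT : 0 < T) (hσ : 0 < σ)
    (f v : ℝ → H)
    (hf : MemLp f 2 (volume.restrict (Set.Icc 0 T)))
    (hv : IntegrableOn v (Set.Icc 0 T) volume)
    (heq : ∀ t ∈ Set.Icc (0:ℝ) T, v t = ∫ s in (0:ℝ)..t, (f s - σ⁻¹ • v s)) :
    (∫ s in (0:ℝ)..T, ‖f s - σ⁻¹ • v s‖ ^ 2 ≤ ∫ s in (0:ℝ)..T, ‖f s‖ ^ 2) ∧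
    (∀ t ∈ Set.Icc (0:ℝ) T,
      ‖v t‖ ≤ Real.sqrt (σ / 2) * Real.sqrt (∫ s in (0:ℝ)..T, ‖f s‖ ^ 2)) := by
  have hT0 : (0:ℝ) ≤ T := hT.le
  haveI : IsFiniteMeasure (volume.restrict (Icc (0:ℝ) T)) :=
    ⟨by rw [Measure.restrict_apply_univ]; exact measure_Icc_lt_top⟩
  set g : ℝ → H := fun s => f s - σ⁻¹ • v s with hgdef
  have hgs : ∀ s, f s - σ⁻¹ • v s = g s := fun s => rfl
  -- basic integrability
  have hfi : IntegrableOn f (Icc 0 T) := hf.integrable (by norm_num)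
  have hgi : IntegrableOn g (Icc 0 T) := hfi.sub (Integrable.smul σ⁻¹ hv)
  -- v as primitive of g
  have hveq : ∀ t ∈ Icc (0:ℝ) T, v t = ∫ s in Ioc (0:ℝ) t, g s := by
    intro t ht
    exact (heq t ht).trans (intervalIntegral.integral_of_le ht.1)
  -- continuity and boundedness of v on [0,T]
  have hvc : ContinuousOn v (Icc 0 T) :=
    (intervalIntegral.continuousOn_primitive (f := g) (a := 0) (b := T) (μ := volume)
      hgi).congr hveq
  obtain ⟨C, hC⟩ := isCompact_Icc.exists_bound_of_continuousOn hvc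
  have hC0 : 0 ≤ C := (norm_nonneg (v 0)).trans (hC 0 ⟨le_refl _, hT0⟩)
  have hv2 : MemLp v 2 (volume.restrict (Icc 0 T)) :=
    MemLp.of_bound hv.aestronglyMeasurable C
      ((ae_restrict_iff' measurableSet_Icc).2 (Filter.Eventually.of_forall hC))
  have hg2 : MemLp g 2 (volume.restrict (Icc 0 T)) := hf.sub (hv2.const_smul σ⁻¹)
  -- integrability of the various scalar integrands on Icc 0 T
  have hf2i : Integrable (fun s => ‖f s‖ ^ 2) (volume.restrict (Icc 0 T)) := by
    have := hf.integrable_norm_rpow (by norm_num) (by norm_num)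
    refine this.congr (Filter.Eventually.of_forall fun s => ?_)
    norm_num
  have hv2i : Integrable (fun s => ‖v s‖ ^ 2) (volume.restrict (Icc 0 T)) := by
    refine (integrable_const (C^2)).mono' (hv.aestronglyMeasurable.norm.pow 2)
      ((ae_restrict_iff' measurableSet_Icc).2 (Filter.Eventually.of_forall fun x hx => ?_))
    rw [Real.norm_eq_abs, abs_of_nonneg (by positivity)]
    exact pow_le_pow_left₀ (norm_nonneg _) (hC x hx) 2
  have hvgi : Integrable (fun s => ⟪v s, g s⟫) (volume.restrict (Icc 0 T)) := by
    refine (hgi.norm.const_mul C).mono' (hv.aestronglyMeasurable.inner hgi.aestronglyMeasurable)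
      ((ae_restrict_iff' measurableSet_Icc).2 (Filter.Eventually.of_forall fun x hx => ?_))
    calc ‖⟪v x, g x⟫‖ ≤ ‖v x‖ * ‖g x‖ := norm_inner_le_norm _ _
      _ ≤ C * ‖g x‖ := mul_le_mul_of_nonneg_right (hC x hx) (norm_nonneg _)
  have hvfi : Integrable (fun s => ⟪v s, f s⟫) (volume.restrict (Icc 0 T)) := by
    refine (hfi.norm.const_mul C).mono' (hv.aestronglyMeasurable.inner hfi.aestronglyMeasurable)
      ((ae_restrict_iff' measurableSet_Icc).2 (Filter.Eventually.of_forall fun x hx => ?_))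
    calc ‖⟪v x, f x⟫‖ ≤ ‖v x‖ * ‖f x‖ := norm_inner_le_norm _ _
      _ ≤ C * ‖f x‖ := mul_le_mul_of_nonneg_right (hC x hx) (norm_nonneg _)
  -- the key energy identity
  have key : ∀ t ∈ Icc (0:ℝ) T, ‖v t‖ ^ 2 = 2 * ∫ s in Ioc (0:ℝ) t, ⟪v s, g s⟫ := by
    intro t ht
    have hsub : Ioc (0:ℝ) t ⊆ Icc (0:ℝ) T := fun x hx => ⟨hx.1.le, hx.2.trans ht.2⟩
    have hgt : Integrable g (volume.restrict (Ioc (0:ℝ) t)) := hgi.mono_set hsub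
    have hgm : AEStronglyMeasurable g (volume.restrict (Ioc (0:ℝ) t)) := hgt.aestronglyMeasurable
    have hA : Integrable (fun u => ⟪v u, g u⟫) (volume.restrict (Ioc (0:ℝ) t)) :=
      hvgi.mono_measure (Measure.restrict_mono hsub le_rfl)
    -- the indicator function on the product
    set F : ℝ × ℝ → ℝ :=
      Set.indicator {p : ℝ × ℝ | p.1 < p.2} (fun p => ⟪g p.2, g p.1⟫) with hFdef
    have hFmeas : AEStronglyMeasurable F
        ((volume.restrict (Ioc (0:ℝ) t)).prod (volume.restrict (Ioc (0:ℝ) t))) := by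
      exact (hgm.comp_snd.inner hgm.comp_fst).indicator (measurableSet_lt measurable_fst measurable_snd)
    have hFint : Integrable F
        ((volume.restrict (Ioc (0:ℝ) t)).prod (volume.restrict (Ioc (0:ℝ) t))) := by
      refine (hgt.norm.mul_prod hgt.norm).mono' hFmeas (Filter.Eventually.of_forall ?_)
      rintro ⟨u, s⟩
      rw [hFdef]
      simp only [Set.indicator_apply, Set.mem_setOf_eq]
      split_ifs
      · calc ‖⟪g s, g u⟫‖ ≤ ‖g s‖ * ‖g u‖ := norm_inner_le_norm _ _
          _ = ‖g u‖ * ‖g s‖ := mul_comm _ _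
      · simpa using mul_nonneg (norm_nonneg (g (u, s).1)) (norm_nonneg (g (u, s).2))
    -- slices of F
    have hFslice : ∀ u ∈ Ioc (0:ℝ) t,
        ∫ s in Ioc (0:ℝ) t, F (u, s) = ∫ s in Ioc u t, ⟪g s, g u⟫ := by
      intro u hu
      have h1 : (fun s => F (u, s)) = (Ioi u).indicator (fun s => ⟪g s, g u⟫) := by
        ext s
        rw [hFdef]
        by_cases h : u < s <;>
          simp [Set.indicator_apply, Set.mem_Ioi, Set.mem_setOf_eq, h]
      have hset : Ioi u ∩ Ioc (0:ℝ) t = Ioc u t := by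
        ext x
        simp only [Set.mem_inter_iff, Set.mem_Ioi, Set.mem_Ioc]
        exact ⟨fun h => ⟨h.1, h.2.2⟩, fun h => ⟨h.1, hu.1.trans h.1, h.2⟩⟩
      rw [h1, integral_indicator measurableSet_Ioi, Measure.restrict_restrict measurableSet_Ioi,
        hset]
    have hFslice' : ∀ s ∈ Ioc (0:ℝ) t,
        ∫ u in Ioc (0:ℝ) t, F (u, s) = ⟪v s, g s⟫ := by
      intro s hs
      have h1 : (fun u => F (u, s)) = (Iio s).indicator (fun u => ⟪g s, g u⟫) := by
        ext u
        rw [hFdef]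
        by_cases h : u < s <;>
          simp [Set.indicator_apply, Set.mem_Iio, Set.mem_setOf_eq, h]
      rw [h1, integral_indicator measurableSet_Iio, Measure.restrict_restrict measurableSet_Iio]
      have h2 : Iio s ∩ Ioc (0:ℝ) t = Ioo 0 s := by
        ext x
        simp only [Set.mem_inter_iff, Set.mem_Iio, Set.mem_Ioc, Set.mem_Ioo]
        exact ⟨fun h => ⟨h.2.1, h.1⟩, fun h => ⟨h.2, h.1, (h.2.le.trans hs.2)⟩⟩
      rw [h2, ← integral_Ioc_eq_integral_Ioo]
      calc ∫ u in Ioc (0:ℝ) s, ⟪g s, g u⟫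
          = ⟪g s, ∫ u in Ioc (0:ℝ) s, g u⟫ :=
            integral_inner (hgi.mono_set fun x hx => ⟨hx.1.le, hx.2.trans (hs.2.trans ht.2)⟩) (g s)
        _ = ⟪v s, g s⟫ := by
            rw [← hveq s ⟨hs.1.le, hs.2.trans ht.2⟩, real_inner_comm]
    -- split of the full inner integral
    have hsplit : ∀ u ∈ Ioc (0:ℝ) t,
        ∫ s in Ioc (0:ℝ) t, ⟪g s, g u⟫ = ⟪v u, g u⟫ + ∫ s in Ioc (0:ℝ) t, F (u, s) := by
      intro u hu
      have husub : u ∈ Icc (0:ℝ) T := ⟨hu.1.le, hu.2.trans ht.2⟩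
      have h0u : Integrable (fun s => ⟪g s, g u⟫) (volume.restrict (Ioc (0:ℝ) u)) :=
        ((hgi.mono_set fun x hx => ⟨hx.1.le, hx.2.trans husub.2⟩).inner_const (g u))
      have hut : Integrable (fun s => ⟪g s, g u⟫) (volume.restrict (Ioc u t)) :=
        ((hgi.mono_set fun x hx => ⟨(hu.1.trans hx.1).le, hx.2.trans ht.2⟩).inner_const (g u))
      rw [hFslice u hu,
        show Ioc (0:ℝ) t = Ioc 0 u ∪ Ioc u t from (Ioc_union_Ioc_eq_Ioc hu.1.le hu.2).symm,
        setIntegral_union (Set.Ioc_disjoint_Ioc_of_le le_rfl) measurableSet_Ioc h0u hut]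
      congr 1
      calc ∫ s in Ioc (0:ℝ) u, ⟪g s, g u⟫
          = ⟪g u, ∫ s in Ioc (0:ℝ) u, g s⟫ := by
            rw [← integral_inner (hgi.mono_set fun x hx => ⟨hx.1.le, hx.2.trans husub.2⟩) (g u)]
            exact integral_congr_ae (Filter.Eventually.of_forall fun s => real_inner_comm _ _)
        _ = ⟪v u, g u⟫ := by rw [← hveq u husub, real_inner_comm]
    -- assemble
    have h1 : ‖v t‖ ^ 2 = ∫ u in Ioc (0:ℝ) t, ⟪v t, g u⟫ :=
      calc ‖v t‖ ^ 2 = ⟪v t, v t⟫ := (real_inner_self_eq_norm_sq _).symm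
        _ = ⟪v t, ∫ u in Ioc (0:ℝ) t, g u⟫ := by rw [← hveq t ht]
        _ = ∫ u in Ioc (0:ℝ) t, ⟪v t, g u⟫ := (integral_inner hgt (v t)).symm
    have h2 : ∀ u, ⟪v t, g u⟫ = ∫ s in Ioc (0:ℝ) t, ⟪g s, g u⟫ := by
      intro u
      rw [hveq t ht, real_inner_comm, ← integral_inner hgt (g u)]
      exact integral_congr_ae (Filter.Eventually.of_forall fun s => real_inner_comm _ _)
    have hDint : Integrable (fun u => ∫ s in Ioc (0:ℝ) t, F (u, s))
        (volume.restrict (Ioc (0:ℝ) t)) := hFint.integral_prod_left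
    have h3 : ‖v t‖ ^ 2 =
        (∫ u in Ioc (0:ℝ) t, ⟪v u, g u⟫) + ∫ u in Ioc (0:ℝ) t, ∫ s in Ioc (0:ℝ) t, F (u, s) := by
      rw [h1, ← integral_add hA hDint]
      refine integral_congr_ae ((ae_restrict_iff' measurableSet_Ioc).2
        (Filter.Eventually.of_forall fun u hu => ?_))
      simpa using (h2 u).trans (hsplit u hu)
    have h4 : ∫ u in Ioc (0:ℝ) t, ∫ s in Ioc (0:ℝ) t, F (u, s)
        = ∫ u in Ioc (0:ℝ) t, ⟪v u, g u⟫ := by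
      rw [integral_integral_swap (f := fun u s => F (u, s)) hFint]
      refine integral_congr_ae ((ae_restrict_iff' measurableSet_Ioc).2
        (Filter.Eventually.of_forall fun s hs => ?_))
      exact hFslice' s hs
    rw [h3, h4]; ring
  -- pointwise identity for the inner product with g
  have hvg_eq : ∀ s, ⟪v s, g s⟫ = ⟪v s, f s⟫ - σ⁻¹ * ‖v s‖ ^ 2 := by
    intro s
    rw [hgdef]
    simp [inner_sub_right, real_inner_smul_right, real_inner_self_eq_norm_sq]
  constructor
  · -- part (a)
    have hnormg : ∀ s, ‖g s‖ ^ 2 =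
        ‖f s‖ ^ 2 - (2 * σ⁻¹) * ⟪v s, g s⟫ - σ⁻¹ ^ 2 * ‖v s‖ ^ 2 := by
      intro s
      rw [hvg_eq s, hgdef]
      simp only
      rw [norm_sub_sq_real, real_inner_smul_right, norm_smul, Real.norm_eq_abs,
        abs_of_pos (inv_pos.2 hσ), mul_pow, real_inner_comm (f s) (v s)]
      ring
    have hg2i : Integrable (fun s => ‖g s‖ ^ 2) (volume.restrict (Ioc 0 T)) := by
      refine Integrable.mono_measure ?_ (Measure.restrict_mono Ioc_subset_Icc_self le_rfl)
      refine (hf2i.sub (hvgi.const_mul (2 * σ⁻¹))).sub (hv2i.const_mul (σ⁻¹ ^ 2)) |>.congr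
        (Filter.Eventually.of_forall fun s => ?_)
      simp only [Pi.sub_apply]
      rw [hnormg s]
    have hEq : ∫ s in Ioc (0:ℝ) T, ‖g s‖ ^ 2 =
        (∫ s in Ioc (0:ℝ) T, ‖f s‖ ^ 2) - (2 * σ⁻¹) * (∫ s in Ioc (0:ℝ) T, ⟪v s, g s⟫)
          - σ⁻¹ ^ 2 * ∫ s in Ioc (0:ℝ) T, ‖v s‖ ^ 2 := by
      have hfI : Integrable (fun s => ‖f s‖ ^ 2) (volume.restrict (Ioc 0 T)) :=
        hf2i.mono_measure (Measure.restrict_mono Ioc_subset_Icc_self le_rfl)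
      have hvgI : Integrable (fun s => ⟪v s, g s⟫) (volume.restrict (Ioc 0 T)) :=
        hvgi.mono_measure (Measure.restrict_mono Ioc_subset_Icc_self le_rfl)
      have hv2I : Integrable (fun s => ‖v s‖ ^ 2) (volume.restrict (Ioc 0 T)) :=
        hv2i.mono_measure (Measure.restrict_mono Ioc_subset_Icc_self le_rfl)
      have hI1 : Integrable (fun s => ‖f s‖ ^ 2 - (2 * σ⁻¹) * ⟪v s, g s⟫)
          (volume.restrict (Ioc 0 T)) := hfI.sub (hvgI.const_mul _)
      calc ∫ s in Ioc (0:ℝ) T, ‖g s‖ ^ 2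
          = ∫ s in Ioc (0:ℝ) T,
              (‖f s‖ ^ 2 - (2 * σ⁻¹) * ⟪v s, g s⟫ - σ⁻¹ ^ 2 * ‖v s‖ ^ 2) :=
            integral_congr_ae (Filter.Eventually.of_forall fun s => hnormg s)
        _ = _ := by
            rw [integral_sub hI1 (hv2I.const_mul _),
              integral_sub hfI (hvgI.const_mul _), integral_const_mul, integral_const_mul]
    have hkeyT := key T ⟨hT0, le_refl T⟩
    have hvT : (0:ℝ) ≤ ‖v T‖ ^ 2 := sq_nonneg _
    have hv2nn : (0:ℝ) ≤ ∫ s in Ioc (0:ℝ) T, ‖v s‖ ^ 2 :=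
      integral_nonneg fun s => sq_nonneg _
    have hinv : (0:ℝ) ≤ σ⁻¹ := (inv_pos.2 hσ).le
    simp only [hgs]
    rw [intervalIntegral.integral_of_le hT0, intervalIntegral.integral_of_le hT0]
    nlinarith [sq_nonneg σ⁻¹]
  · -- part (b)
    intro t ht
    have hb1 : ∀ s, 2 * ⟪v s, g s⟫ ≤ σ / 2 * ‖f s‖ ^ 2 := by
      intro s
      rw [hvg_eq s]
      have hcs := real_inner_le_norm (v s) (f s)
      have hinv : σ * σ⁻¹ = 1 := mul_inv_cancel₀ hσ.ne'
      nlinarith [sq_nonneg (σ * ‖f s‖ - 2 * ‖v s‖), mul_pos hσ hσ, inv_pos.2 hσ,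
        sq_nonneg ‖v s‖, sq_nonneg ‖f s‖,
        mul_le_mul_of_nonneg_left hcs hσ.le]
    have hsub : Ioc (0:ℝ) t ⊆ Icc (0:ℝ) T := fun x hx => ⟨hx.1.le, hx.2.trans ht.2⟩
    have hfI := hf2i.mono_measure (Measure.restrict_mono Ioc_subset_Icc_self le_rfl)
    have h2b : ‖v t‖ ^ 2 ≤ σ / 2 * ∫ s in Ioc (0:ℝ) T, ‖f s‖ ^ 2 := by
      calc ‖v t‖ ^ 2 = 2 * ∫ s in Ioc (0:ℝ) t, ⟪v s, g s⟫ := key t ht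
        _ = ∫ s in Ioc (0:ℝ) t, 2 * ⟪v s, g s⟫ := (integral_const_mul _ _).symm
        _ ≤ ∫ s in Ioc (0:ℝ) t, σ / 2 * ‖f s‖ ^ 2 := by
            refine setIntegral_mono_on ((hvgi.mono_measure (Measure.restrict_mono hsub le_rfl)).const_mul 2)
              ((hf2i.mono_measure (Measure.restrict_mono hsub le_rfl)).const_mul (σ / 2)) measurableSet_Ioc fun s _ => hb1 s
        _ ≤ ∫ s in Ioc (0:ℝ) T, σ / 2 * ‖f s‖ ^ 2 := by
            refine setIntegral_mono_set (hfI.const_mul (σ / 2))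
              (Filter.Eventually.of_forall fun s => by positivity)
              ((Ioc_subset_Ioc_right ht.2).eventuallyLE)
        _ = σ / 2 * ∫ s in Ioc (0:ℝ) T, ‖f s‖ ^ 2 := integral_const_mul _ _
    have h3 : ‖v t‖ ≤ Real.sqrt (σ / 2 * ∫ s in Ioc (0:ℝ) T, ‖f s‖ ^ 2) := by
      rw [← Real.sqrt_sq (norm_nonneg (v t))]
      exact Real.sqrt_le_sqrt h2b
    rw [Real.sqrt_mul (by positivity : (0:ℝ) ≤ σ / 2)] at h3
    rw [intervalIntegral.integral_of_le hT0]
    exact h3
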